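/- Define the sequence f by f_1 = 0, f_2 = 1, f_3 = 2 and f_n = f_{n−1} + f_{n−3} + 1 for n ≥ 4. Then for every n ≥ 1, f_n + 1 ≤ 1.4656^n; in particular f_n ≤ 1.4656^n for all n ≥ 1. -/
import Mathlib


/-- With `f_1 = 0`, `f_2 = 1`, `f_3 = 2` and
`f_n = f_{n-1} + f_{n-3} + 1` for `n ≥ 4`, one has `f_n + 1 ≤ 1.4656 ^ n`
for all `n ≥ 1`; in particular `f_n ≤ 1.4656 ^ n`. -/
theorem f_le_growth (f : ℕ → ℕ)
    (h1 : f 1 = 0) (h2 : f 2 = 1) (h3 : f 3 = 2)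
    (hrec : ∀ n, 4 ≤ n → f n = f (n - 1) + f (n - 3) + 1)
    (n : ℕ) (hn : 1 ≤ n) :
    (f n : ℝ) + 1 ≤ 1.4656 ^ n ∧ (f n : ℝ) ≤ 1.4656 ^ n := by
  have key : ∀ n, 1 ≤ n → (f n : ℝ) + 1 ≤ 1.4656 ^ n := by
    intro n
    induction n using Nat.strong_induction_on with
    | _ n ih =>
      intro hn
      match n, hn with
      | 1, _ => simp [h1]; norm_num
      | 2, _ => simp [h2]; norm_num
      | 3, _ => simp [h3]; norm_num
      | (n+4), _ =>
        rw [hrec (n+4) (by omega)]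
        have e1 : n + 4 - 1 = n + 3 := by omega
        have e3 : n + 4 - 3 = n + 1 := by omega
        rw [e1, e3]
        have ha := ih (n+3) (by omega) (by omega)
        have hb := ih (n+1) (by omega) (by omega)
        have key3 : (1.4656 : ℝ) ^ (n+1) * (1.4656 ^ 3) ≥
            1.4656 ^ (n+1) * (1.4656 ^ 2 + 1) := by
          apply mul_le_mul_of_nonneg_left (by norm_num) (by positivity)
        have hpow : (1.4656 : ℝ) ^ (n + 4) = 1.4656 ^ (n+1) * 1.4656 ^ 3 := by
          rw [← pow_add]
        have hpow2 : (1.4656 : ℝ) ^ (n + 3) = 1.4656 ^ (n+1) * 1.4656 ^ 2 := by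
          rw [← pow_add]
        push_cast
        linarith [ha, hb, key3, hpow, hpow2]
  have hk := key n hn
  constructor
  · exact hk
  · have : (f n : ℝ) ≤ (f n : ℝ) + 1 := by linarith
    linarith
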